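/- As H tends to 1 from the left, D_{3,2}^*(H) tends to 0 and the derivative (d/dH) D_{3,2}^*(H) tends to 0; equivalently, viewing D_{3,2}^* as a smooth function of H on (0, 1], D_{3,2}^*(1) = 0 and its first derivative at H = 1 equals 0. -/

import Mathlib

open Real Set Finset

/-- Autocovariance function of fractional Gaussian noise with Hurst parameter `H`:
`ρ_k(H) = ((k+1)^{2H} − 2·k^{2H} + (k−1)^{2H})/2` for `k ≥ 1`, and `ρ_0(H) = 1`. -/
noncomputable def rho (H : ℝ) (k : ℕ) : ℝ :=
  if k = 0 then 1
  else (((k : ℝ) + 1) ^ (2 * H) - 2 * (k : ℝ) ^ (2 * H) + ((k : ℝ) - 1) ^ (2 * H)) / 2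

/-- The Cramer numerator determinant `D_{3,2}^*(H)` for the bilateral projection with `n = 4`. -/
noncomputable def D32 (H : ℝ) : ℝ :=
  Matrix.det !![1 + rho H 6, rho H 3, rho H 2 + rho H 4;
                rho H 1 + rho H 5, rho H 2, rho H 1 + rho H 3;
                rho H 2 + rho H 4, rho H 1, 1 + rho H 2]


noncomputable def Eb (c H : ℝ) : ℝ := Real.exp (Real.log c * (2 * H))

lemma hEb (c x : ℝ) : HasDerivAt (Eb c) (Eb c x * (Real.log c * 2)) x := by
  have h1 : HasDerivAt (fun H : ℝ => Real.log c * (2 * H)) (Real.log c * 2) x := by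
    simpa using ((hasDerivAt_id x).const_mul (2:ℝ)).const_mul (Real.log c)
  exact (Real.hasDerivAt_exp (Real.log c * (2 * x))).comp x h1

lemma Eb_one (c : ℝ) (hc : 0 < c) : Eb c 1 = c ^ 2 := by
  have : Real.log c * (2 * 1) = (2:ℕ) * Real.log c := by push_cast; ring
  rw [Eb, this, Real.exp_nat_mul, Real.exp_log hc]

lemma contDiff_Eb (c : ℝ) : ContDiff ℝ ⊤ (Eb c) := by
  unfold Eb; fun_prop

noncomputable def r1 (H : ℝ) : ℝ := (Eb 2 H - 2) / 2
noncomputable def r2 (H : ℝ) : ℝ := (Eb 3 H - 2 * Eb 2 H + 1) / 2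
noncomputable def r3 (H : ℝ) : ℝ := (Eb 4 H - 2 * Eb 3 H + Eb 2 H) / 2
noncomputable def r4 (H : ℝ) : ℝ := (Eb 5 H - 2 * Eb 4 H + Eb 3 H) / 2
noncomputable def r5 (H : ℝ) : ℝ := (Eb 6 H - 2 * Eb 5 H + Eb 4 H) / 2
noncomputable def r6 (H : ℝ) : ℝ := (Eb 7 H - 2 * Eb 6 H + Eb 5 H) / 2

noncomputable def Fd (H : ℝ) : ℝ :=
  (1 + r6 H) * (r2 H * (1 + r2 H) - (r1 H + r3 H) * r1 H)
  - r3 H * ((r1 H + r5 H) * (1 + r2 H) - (r1 H + r3 H) * (r2 H + r4 H))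
  + (r2 H + r4 H) * ((r1 H + r5 H) * r1 H - r2 H * (r2 H + r4 H))

set_option maxHeartbeats 1000000 in
lemma D32_eq_Fd {H : ℝ} (hH : 0 < H) : D32 H = Fd H := by
  have h2 : (2:ℝ) * H ≠ 0 := by positivity
  unfold D32
  rw [Matrix.det_fin_three]
  simp only [Matrix.cons_val', Matrix.cons_val_zero, Matrix.cons_val_one, Matrix.head_cons,
    Matrix.empty_val', Matrix.cons_val_fin_one, Matrix.head_fin_const, Matrix.cons_val_two,
    Matrix.tail_cons, Matrix.of_apply]
  unfold rho
  norm_num [Real.zero_rpow h2, Real.one_rpow]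
  rw [Real.rpow_def_of_pos (by norm_num : (0:ℝ) < 2),
      Real.rpow_def_of_pos (by norm_num : (0:ℝ) < 3),
      Real.rpow_def_of_pos (by norm_num : (0:ℝ) < 4),
      Real.rpow_def_of_pos (by norm_num : (0:ℝ) < 5),
      Real.rpow_def_of_pos (by norm_num : (0:ℝ) < 6),
      Real.rpow_def_of_pos (by norm_num : (0:ℝ) < 7)]
  unfold Fd r1 r2 r3 r4 r5 r6 Eb
  ring

lemma contDiff_Fd : ContDiff ℝ ⊤ Fd := by
  unfold Fd r1 r2 r3 r4 r5 r6 Eb; fun_prop (disch := norm_num)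

lemma Fd_one : Fd 1 = 0 := by
  unfold Fd r1 r2 r3 r4 r5 r6
  rw [Eb_one 2 (by norm_num), Eb_one 3 (by norm_num), Eb_one 4 (by norm_num),
      Eb_one 5 (by norm_num), Eb_one 6 (by norm_num), Eb_one 7 (by norm_num)]
  norm_num

lemma hasDerivAt_Fd_one : HasDerivAt Fd 0 1 := by
  have e2 := hEb 2 1; have e3 := hEb 3 1; have e4 := hEb 4 1
  have e5 := hEb 5 1; have e6 := hEb 6 1; have e7 := hEb 7 1
  have h1 : HasDerivAt r1 ((Eb 2 1 * (Real.log 2 * 2)) / 2) 1 := by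
    unfold r1; exact (e2.sub_const 2).div_const 2
  have h2 : HasDerivAt r2 ((Eb 3 1 * (Real.log 3 * 2) - 2 * (Eb 2 1 * (Real.log 2 * 2))) / 2) 1 := by
    unfold r2; exact ((e3.sub (e2.const_mul 2)).add_const 1).div_const 2
  have h3 : HasDerivAt r3 ((Eb 4 1 * (Real.log 4 * 2) - 2 * (Eb 3 1 * (Real.log 3 * 2)) + Eb 2 1 * (Real.log 2 * 2)) / 2) 1 := by
    unfold r3; exact ((e4.sub (e3.const_mul 2)).add e2).div_const 2
  have h4 : HasDerivAt r4 ((Eb 5 1 * (Real.log 5 * 2) - 2 * (Eb 4 1 * (Real.log 4 * 2)) + Eb 3 1 * (Real.log 3 * 2)) / 2) 1 := by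
    unfold r4; exact ((e5.sub (e4.const_mul 2)).add e3).div_const 2
  have h5 : HasDerivAt r5 ((Eb 6 1 * (Real.log 6 * 2) - 2 * (Eb 5 1 * (Real.log 5 * 2)) + Eb 4 1 * (Real.log 4 * 2)) / 2) 1 := by
    unfold r5; exact ((e6.sub (e5.const_mul 2)).add e4).div_const 2
  have h6 : HasDerivAt r6 ((Eb 7 1 * (Real.log 7 * 2) - 2 * (Eb 6 1 * (Real.log 6 * 2)) + Eb 5 1 * (Real.log 5 * 2)) / 2) 1 := by
    unfold r6; exact ((e7.sub (e6.const_mul 2)).add e5).div_const 2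
  have chain := (((h6.const_add 1).mul ((h2.mul (h2.const_add 1)).sub ((h1.add h3).mul h1))).sub
      (h3.mul (((h1.add h5).mul (h2.const_add 1)).sub ((h1.add h3).mul (h2.add h4))))).add
      ((h2.add h4).mul (((h1.add h5).mul h1).sub (h2.mul (h2.add h4))))
  have hfun : Fd = (fun H => ((1 + r6 H) * (r2 H * (1 + r2 H) - (r1 H + r3 H) * r1 H)
      - r3 H * ((r1 H + r5 H) * (1 + r2 H) - (r1 H + r3 H) * (r2 H + r4 H)))
      + (r2 H + r4 H) * ((r1 H + r5 H) * r1 H - r2 H * (r2 H + r4 H))) := by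
    funext H; unfold Fd; ring
  rw [hfun]
  convert chain using 1
  · rfl
  · rfl
  · rfl
  have v1 : r1 1 = 1 := by unfold r1; rw [Eb_one 2 (by norm_num)]; norm_num
  have v2 : r2 1 = 1 := by unfold r2; rw [Eb_one 3 (by norm_num), Eb_one 2 (by norm_num)]; norm_num
  have v3 : r3 1 = 1 := by
    unfold r3; rw [Eb_one 4 (by norm_num), Eb_one 3 (by norm_num), Eb_one 2 (by norm_num)]; norm_num
  have v4 : r4 1 = 1 := by
    unfold r4; rw [Eb_one 5 (by norm_num), Eb_one 4 (by norm_num), Eb_one 3 (by norm_num)]; norm_num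
  have v5 : r5 1 = 1 := by
    unfold r5; rw [Eb_one 6 (by norm_num), Eb_one 5 (by norm_num), Eb_one 4 (by norm_num)]; norm_num
  have v6 : r6 1 = 1 := by
    unfold r6; rw [Eb_one 7 (by norm_num), Eb_one 6 (by norm_num), Eb_one 5 (by norm_num)]; norm_num
  simp only [Pi.add_apply, Pi.mul_apply, Pi.sub_apply]
  rw [v1, v2, v3, v4, v5, v6]
  ring

theorem stmt_12 :
    Filter.Tendsto D32 (nhdsWithin 1 (Iio (1 : ℝ))) (nhds 0) ∧
    Filter.Tendsto (deriv D32) (nhdsWithin 1 (Iio (1 : ℝ))) (nhds 0) ∧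
    D32 1 = 0 ∧ deriv D32 1 = 0 := by
  have hmem : Ioi (0:ℝ) ∈ nhds (1:ℝ) := isOpen_Ioi.mem_nhds (by norm_num)
  have heq : D32 =ᶠ[nhds (1:ℝ)] Fd :=
    Filter.eventuallyEq_of_mem hmem fun H hH => D32_eq_Fd hH
  have hD1 : D32 1 = 0 := heq.eq_of_nhds.trans Fd_one
  have hdeq : deriv D32 =ᶠ[nhds (1:ℝ)] deriv Fd := heq.deriv
  have hd1 : deriv D32 1 = 0 := hdeq.eq_of_nhds.trans hasDerivAt_Fd_one.deriv
  have hcF : Continuous Fd := contDiff_Fd.continuous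
  have hcdF : Continuous (deriv Fd) := contDiff_Fd.continuous_deriv le_top
  refine ⟨?_, ?_, hD1, hd1⟩
  · have : Filter.Tendsto Fd (nhdsWithin 1 (Iio (1:ℝ))) (nhds 0) := by
      rw [← Fd_one]
      exact (hcF.continuousAt.tendsto).mono_left nhdsWithin_le_nhds
    exact this.congr' ((heq.symm).filter_mono nhdsWithin_le_nhds)
  · have : Filter.Tendsto (deriv Fd) (nhdsWithin 1 (Iio (1:ℝ))) (nhds 0) := by
      rw [← hasDerivAt_Fd_one.deriv]
      exact (hcdF.continuousAt.tendsto).mono_left nhdsWithin_le_nhds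
    exact this.congr' ((hdeq.symm).filter_mono nhdsWithin_le_nhds)
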